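/- There exists a unique p* > 0 satisfying (P_C + p*)·r'(p*) = r(p*), where r(p) = c·log₂(1 + g·p/(σ² + I)). -/

import Mathlib

theorem stmt_8 (c g σ2 I P_C : ℝ) (hc : 0 < c) (hg : 0 < g) (hσ : 0 < σ2) (hI : 0 ≤ I)
    (hPC : 0 < P_C)
    (r : ℝ → ℝ) (hr : ∀ p, r p = c * Real.logb 2 (1 + g * p / (σ2 + I))) :
    ∃! pstar : ℝ, 0 < pstar ∧ (P_C + pstar) * deriv r pstar = r pstar := by
  set N : ℝ := σ2 + I with hNdef
  have hN : 0 < N := by positivity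
  have hlog2 : 0 < Real.log 2 := Real.log_pos one_lt_two
  have hrfun : r = fun p => c * (Real.log (1 + g * p / N) / Real.log 2) := by
    funext p
    rw [hr p, Real.logb]
  -- positivity facts for p ≥ 0
  have hden : ∀ p : ℝ, 0 ≤ p → 0 < N + g * p := fun p hp => by positivity
  have harg : ∀ p : ℝ, 0 ≤ p → 0 < 1 + g * p / N := fun p hp => by positivity
  -- derivative of r
  have hrderiv : ∀ p : ℝ, 0 ≤ p →
      HasDerivAt r (c * g / (Real.log 2 * (N + g * p))) p := by
    intro p hp
    have h1 : HasDerivAt (fun q : ℝ => 1 + g * q / N) (g / N) p := by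
      have := ((hasDerivAt_id p).const_mul g).div_const N
      simpa using this.const_add 1
    have h2 := h1.log (ne_of_gt (harg p hp))
    have h3 := (h2.div_const (Real.log 2)).const_mul c
    rw [hrfun]
    refine h3.congr_deriv ?_
    have h4 : 1 + g * p / N = (N + g * p) / N := by field_simp
    rw [h4]
    field_simp
  -- the auxiliary function
  set f : ℝ → ℝ := fun p => g * (P_C + p) / (N + g * p) - Real.log (1 + g * p / N)
    with hfdef
  have hfderiv : ∀ p : ℝ, 0 ≤ p →
      HasDerivAt f (-(g ^ 2 * (P_C + p) / (N + g * p) ^ 2)) p := by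
    intro p hp
    have h1 : HasDerivAt (fun q : ℝ => g * (P_C + q)) g p := by
      have := ((hasDerivAt_id p).const_add P_C).const_mul g
      simpa using this
    have h2 : HasDerivAt (fun q : ℝ => N + g * q) g p := by
      have := ((hasDerivAt_id p).const_mul g).const_add N
      simpa using this
    have h3 := h1.div h2 (ne_of_gt (hden p hp))
    have h4 : HasDerivAt (fun q : ℝ => 1 + g * q / N) (g / N) p := by
      have := ((hasDerivAt_id p).const_mul g).div_const N
      simpa using this.const_add 1
    have h5 := h4.log (ne_of_gt (harg p hp))
    have h6 := h3.sub h5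
    refine h6.congr_deriv ?_
    have hne : (N + g * p) ≠ 0 := ne_of_gt (hden p hp)
    have hne2 : (1 + g * p / N) ≠ 0 := ne_of_gt (harg p hp)
    field_simp
    ring
  -- f is continuous on Ici 0
  have hfcont : ContinuousOn f (Set.Ici (0 : ℝ)) := fun p hp =>
    ((hfderiv p hp).continuousAt).continuousWithinAt
  -- f is strictly antitone on Ici 0
  have hanti : StrictAntiOn f (Set.Ici (0 : ℝ)) := by
    apply strictAntiOn_of_deriv_neg (convex_Ici 0) hfcont
    intro p hp
    rw [interior_Ici] at hp
    have hp' : (0 : ℝ) ≤ p := le_of_lt hp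
    rw [(hfderiv p hp').deriv]
    have : 0 < g ^ 2 * (P_C + p) / (N + g * p) ^ 2 := by positivity
    linarith
  -- f 0 > 0
  have hf0 : 0 < f 0 := by
    simp only [hfdef]
    norm_num
    positivity
  -- choose b with f b < 0
  obtain ⟨b, hb_pos, hfb⟩ : ∃ b : ℝ, 0 < b ∧ f b < 0 := by
    refine ⟨max P_C (N * Real.exp 3 / g), lt_max_of_lt_left hPC, ?_⟩
    set b := max P_C (N * Real.exp 3 / g) with hbdef
    have hbP : P_C ≤ b := le_max_left _ _
    have hbE : N * Real.exp 3 / g ≤ b := le_max_right _ _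
    have hb0 : 0 < b := lt_of_lt_of_le hPC hbP
    have h1 : g * (P_C + b) / (N + g * b) ≤ 2 := by
      rw [div_le_iff₀ (hden b hb0.le)]
      nlinarith [hN, hg, hb0]
    have h2 : (3 : ℝ) ≤ Real.log (1 + g * b / N) := by
      have he : Real.exp 3 ≤ g * b / N := by
        rw [le_div_iff₀ hN]
        have := (div_le_iff₀ hg).mp hbE
        linarith
      calc (3 : ℝ) = Real.log (Real.exp 3) := (Real.log_exp 3).symm
        _ ≤ Real.log (1 + g * b / N) := by
            apply Real.log_le_log (Real.exp_pos 3)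
            linarith
    simp only [hfdef]
    linarith
  -- root of f in (0, b)
  obtain ⟨p, hp_mem, hfp⟩ : ∃ p ∈ Set.Ioo (0 : ℝ) b, f p = 0 := by
    have hsub := intermediate_value_Ioo' (le_of_lt hb_pos)
      (hfcont.mono (fun x hx => hx.1 : Set.Icc (0:ℝ) b ⊆ Set.Ici 0))
    have h0mem : (0 : ℝ) ∈ Set.Ioo (f b) (f 0) := ⟨hfb, hf0⟩
    obtain ⟨p, hp, hfp⟩ := hsub h0mem
    exact ⟨p, hp, hfp⟩
  -- equivalence between the equation and f = 0
  have hkey : ∀ q : ℝ, 0 < q → ((P_C + q) * deriv r q = r q ↔ f q = 0) := by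
    intro q hq
    rw [(hrderiv q hq.le).deriv, hrfun]
    simp only [hfdef]
    constructor
    · intro h
      have hne : (N + g * q) ≠ 0 := ne_of_gt (hden q hq.le)
      have : g * (P_C + q) / (N + g * q) = Real.log (1 + g * q / N) := by
        have hc' : c ≠ 0 := ne_of_gt hc
        have hl2 : Real.log 2 ≠ 0 := ne_of_gt hlog2
        field_simp at h ⊢
        have h2 : (c * Real.log 2) * (g * (P_C + q)) =
            (c * Real.log 2) * (Real.log ((N + g * q) / N) * (N + g * q)) := by
          rw [mul_comm g q]; linear_combination (c * Real.log 2) * h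
        have h3 := mul_left_cancel₀ (mul_ne_zero hc' hl2) h2
        rw [mul_comm q g]; linear_combination h3
      linarith [this]
    · intro h
      have hne : (N + g * q) ≠ 0 := ne_of_gt (hden q hq.le)
      have heq : g * (P_C + q) / (N + g * q) = Real.log (1 + g * q / N) := by
        linarith [h]
      have hl2 : Real.log 2 ≠ 0 := ne_of_gt hlog2
      field_simp at heq ⊢
      linear_combination heq
  refine ⟨p, ⟨hp_mem.1, (hkey p hp_mem.1).mpr hfp⟩, ?_⟩
  rintro q ⟨hq_pos, hq_eq⟩
  have hfq : f q = 0 := (hkey q hq_pos).mp hq_eq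
  exact hanti.injOn (le_of_lt hq_pos) (le_of_lt hp_mem.1) (by rw [hfq, hfp])
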